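/- A subset ℛ of 𝒢 is a Z-regulus if, and only if, the following three conditions hold: (⊠1) ℛ is a distant clique with at least three elements; (⊠2) whenever three mutually distinct elements E₀, E₁, E₂ ∈ ℛ and some W ∈ 𝒢 satisfy W ∼ E₀, W not distant from E₁ and W not distant from E₂, then W is not distant from any E ∈ ℛ; (⊠3) ℛ is not properly contained in any subset of 𝒢 satisfying (⊠1) and (⊠2). -/

import Mathlib

/-- The Grassmannian `𝒢` of all subspaces `X ≤ V` with `X ≅ V/X`. -/
def Grass (K V : Type*) [DivisionRing K] [AddCommGroup V] [Module K V] :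
    Set (Submodule K V) :=
  {X | Nonempty (X ≃ₗ[K] (V ⧸ X))}

variable {K V : Type*} [DivisionRing K] [AddCommGroup V] [Module K V]

/-- The dimension of the quotient `E / M` (computed as the rank of `E ⧸ (M ∩ E)`). -/
noncomputable def quotRank (M E : Submodule K V) : Cardinal :=
  Module.rank K (E ⧸ (M.comap E.subtype))

/-- Two subspaces are adjacent if `dim (X/(X ⊓ Y)) = dim (Y/(X ⊓ Y)) = 1`. -/
def Adjacent (X Y : Submodule K V) : Prop :=
  quotRank (X ⊓ Y) X = 1 ∧ quotRank (X ⊓ Y) Y = 1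

/-- Two subspaces are distant if they are complementary: `X ⊕ Y = V`. -/
def Distant (X Y : Submodule K V) : Prop := IsCompl X Y

/-- The star `𝒢[M⟩` with centre `M`. -/
def starSet (M : Submodule K V) : Set (Submodule K V) :=
  {E | M ≤ E ∧ quotRank M E = 1}

/-- `M` is the centre of a star, i.e. there is `X ∈ 𝒢` with `M ≤ X`, `dim (X/M) = 1`. -/
def IsStarCentre (M : Submodule K V) : Prop :=
  ∃ X ∈ Grass K V, M ≤ X ∧ quotRank M X = 1

/-- The top `𝒢⟨N]` with carrier `N`. -/
def topSet (N : Submodule K V) : Set (Submodule K V) :=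
  {E | E ≤ N ∧ quotRank E N = 1}

/-- `N` is the carrier of a top, i.e. there is `X ∈ 𝒢` with `X ≤ N`, `dim (N/X) = 1`. -/
def IsTopCarrier (N : Submodule K V) : Prop :=
  ∃ X ∈ Grass K V, X ≤ N ∧ quotRank X N = 1

/-- An adjacency clique: a set of mutually adjacent elements of `𝒢`. -/
def IsAdjClique (A : Set (Submodule K V)) : Prop :=
  A ⊆ Grass K V ∧ A.Pairwise Adjacent

/-- A maximal adjacency clique. -/
def IsMaxAdjClique (A : Set (Submodule K V)) : Prop :=
  IsAdjClique A ∧ ∀ B, IsAdjClique B → A ⊆ B → A = B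

/-- The pencil `𝒢[M,N] = {X ∈ 𝒢 | M < X < N}`. -/
def pencilSet (M N : Submodule K V) : Set (Submodule K V) :=
  {X ∈ Grass K V | M < X ∧ X < N}

/-- `(M, N)` defines a pencil: there is `X ∈ 𝒢` with `M ≤ X ≤ N` and
`dim (X/M) = dim (N/X) = 1`. -/
def IsPencilPair (M N : Submodule K V) : Prop :=
  ∃ X ∈ Grass K V, M ≤ X ∧ X ≤ N ∧ quotRank M X = 1 ∧ quotRank X N = 1

/-- A pencil in `𝒢`. -/
def IsPencil (S : Set (Submodule K V)) : Prop :=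
  ∃ M N : Submodule K V, IsPencilPair M N ∧ S = pencilSet M N

/-- A point is a one-dimensional subspace. -/
def IsPoint (p : Submodule K V) : Prop := Module.rank K p = 1

/-- A line is a two-dimensional subspace. -/
def IsLine (L : Submodule K V) : Prop := Module.rank K L = 2

/-- Two subspaces meet if they have a common point, i.e. nonzero intersection. -/
def Meets (X Y : Submodule K V) : Prop := X ⊓ Y ≠ ⊥

/-- A distant clique: a set of mutually distant elements of `𝒢`. -/
def IsDistantClique (R : Set (Submodule K V)) : Prop :=
  R ⊆ Grass K V ∧ R.Pairwise Distant

/-- A set has at least three elements. -/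
def HasThree (R : Set (Submodule K V)) : Prop :=
  ∃ A ∈ R, ∃ B ∈ R, ∃ C ∈ R, A ≠ B ∧ A ≠ C ∧ B ≠ C

/-- Condition (R2): if a line meets three mutually distinct elements of `R`
then it meets all elements of `R`. -/
def MeetsThreeMeetsAll (R : Set (Submodule K V)) : Prop :=
  ∀ L : Submodule K V, IsLine L →
    ∀ E₀ ∈ R, ∀ E₁ ∈ R, ∀ E₂ ∈ R, E₀ ≠ E₁ → E₀ ≠ E₂ → E₁ ≠ E₂ →
      Meets L E₀ → Meets L E₁ → Meets L E₂ → ∀ E ∈ R, Meets L E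

/-- A partial `Z`-regulus: conditions (R1) and (R2). -/
def IsPartialZRegulus (R : Set (Submodule K V)) : Prop :=
  (IsDistantClique R ∧ HasThree R) ∧ MeetsThreeMeetsAll R

/-- A `Z`-regulus: a partial `Z`-regulus that is maximal, i.e. not properly
contained in any partial `Z`-regulus. -/
def IsZRegulus (R : Set (Submodule K V)) : Prop :=
  IsPartialZRegulus R ∧ ∀ S : Set (Submodule K V), IsPartialZRegulus S → R ⊆ S → R = S

/-- A directrix of `R`: a line meeting all elements of `R`. -/
def IsDirectrix (R : Set (Submodule K V)) (L : Submodule K V) : Prop :=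
  IsLine L ∧ ∀ E ∈ R, Meets L E

/-- Condition (⊠2) from Theorem `Zreg`. -/
def BoxTwo (R : Set (Submodule K V)) : Prop :=
  ∀ E₀ ∈ R, ∀ E₁ ∈ R, ∀ E₂ ∈ R, E₀ ≠ E₁ → E₀ ≠ E₂ → E₁ ≠ E₂ →
    ∀ W ∈ Grass K V, Adjacent W E₀ → ¬ Distant W E₁ → ¬ Distant W E₂ →
      ∀ E ∈ R, ¬ Distant W E

section Helpers

open Submodule

variable {K V : Type*} [DivisionRing K] [AddCommGroup V] [Module K V]

lemma rank_span_singleton'' {W : Type*} [AddCommGroup W] [Module K W] {x : W} (hx : x ≠ 0) :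
    Module.rank K (span K ({x} : Set W)) = 1 := by
  rw [rank_span_set (LinearIndepOn.singleton (v := id) hx), Cardinal.mk_singleton]

lemma quotRank_eq_one' {M S : Submodule K V} (hMS : M ≤ S) {x : V}
    (hxS : x ∈ S) (hxM : x ∉ M) (h : M ⊔ span K {x} = S) :
    quotRank M S = 1 := by
  set M' := M.comap S.subtype with hM'def
  set q : S ⧸ M' := Submodule.Quotient.mk ⟨x, hxS⟩ with hqdef
  have hq0 : q ≠ 0 := by
    rw [hqdef, ne_eq, Submodule.Quotient.mk_eq_zero]
    simpa [hM'def, Submodule.mem_comap] using hxM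
  have hq : span K ({q} : Set (S ⧸ M')) = ⊤ := by
    rw [eq_top_iff]
    rintro z -
    obtain ⟨⟨s, hs⟩, rfl⟩ := Submodule.Quotient.mk_surjective M' z
    have hs' : s ∈ M ⊔ span K {x} := h ▸ hs
    obtain ⟨m, hm, y, hy, hsum⟩ := Submodule.mem_sup.mp hs'
    obtain ⟨c, rfl⟩ := Submodule.mem_span_singleton.mp hy
    have heq : (⟨s, hs⟩ : S) = ⟨m, hMS hm⟩ + c • ⟨x, hxS⟩ := by
      ext; simp [← hsum]
    rw [heq, Submodule.Quotient.mk_add, Submodule.Quotient.mk_smul]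
    have hm0 : (Submodule.Quotient.mk ⟨m, hMS hm⟩ : S ⧸ M') = 0 := by
      rw [Submodule.Quotient.mk_eq_zero]
      simpa [hM'def, Submodule.mem_comap] using hm
    rw [hm0, zero_add]
    exact Submodule.smul_mem _ _ (Submodule.mem_span_singleton_self q)
  have : Module.rank K (span K ({q} : Set (S ⧸ M'))) = 1 := rank_span_singleton'' hq0
  rw [hq, rank_top] at this
  exact this

lemma sup_span_of_quotRank_eq_one {M S : Submodule K V} (hMS : M ≤ S)
    (h : quotRank M S = 1) {x : V} (hxS : x ∈ S) (hxM : x ∉ M) :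
    M ⊔ span K {x} = S := by
  set M' := M.comap S.subtype with hM'def
  set q : S ⧸ M' := Submodule.Quotient.mk ⟨x, hxS⟩ with hqdef
  have hq0 : q ≠ 0 := by
    rw [hqdef, ne_eq, Submodule.Quotient.mk_eq_zero]
    simpa [hM'def, Submodule.mem_comap] using hxM
  have hrq : Module.rank K (span K ({q} : Set (S ⧸ M'))) = 1 := rank_span_singleton'' hq0
  have h' : Module.rank K (S ⧸ M') = 1 := h
  have hrn := Submodule.rank_quotient_add_rank (span K ({q} : Set (S ⧸ M')))
  rw [hrq, h'] at hrn
  -- hrn : rank ((S⧸M') ⧸ span q) + 1 = 1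
  have h0 : Module.rank K ((S ⧸ M') ⧸ span K ({q} : Set (S ⧸ M'))) = 0 := by
    by_contra hne
    have h1 : (1 : Cardinal) ≤ Module.rank K ((S ⧸ M') ⧸ span K ({q} : Set (S ⧸ M'))) :=
      Cardinal.one_le_iff_ne_zero.mpr hne
    have h2 := add_le_add_left h1 1
    rw [hrn, one_add_one_eq_two] at h2
    exact Cardinal.one_lt_two.not_ge h2
  have hsub : Subsingleton ((S ⧸ M') ⧸ span K ({q} : Set (S ⧸ M'))) := rank_zero_iff.mp h0
  have htop : span K ({q} : Set (S ⧸ M')) = ⊤ :=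
    Submodule.Quotient.subsingleton_iff.mp hsub
  apply le_antisymm
  · exact sup_le hMS ((span_le).mpr (Set.singleton_subset_iff.mpr hxS))
  · intro s hs
    have : (Submodule.Quotient.mk ⟨s, hs⟩ : S ⧸ M') ∈ span K ({q} : Set (S ⧸ M')) := by
      rw [htop]; trivial
    obtain ⟨c, hc⟩ := Submodule.mem_span_singleton.mp this
    rw [hqdef, ← Submodule.Quotient.mk_smul, Submodule.Quotient.eq] at hc
    have hmem : c • x - s ∈ M := by simpa [hM'def, Submodule.mem_comap] using hc
    have : s = -(c • x - s) + c • x := by abel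
    rw [this]
    exact Submodule.add_mem_sup (M.neg_mem hmem)
      (Submodule.smul_mem _ _ (Submodule.mem_span_singleton_self x))

lemma exists_mem_not_mem_of_quotRank_one {M S : Submodule K V}
    (h : quotRank M S = 1) : ∃ x ∈ S, x ∉ M := by
  by_contra hc
  push_neg at hc
  have : M.comap S.subtype = ⊤ := by
    rw [eq_top_iff]; rintro ⟨s, hs⟩ -; exact hc s hs
  have : Subsingleton (S ⧸ M.comap S.subtype) :=
    Submodule.Quotient.subsingleton_iff.mpr this
  have h0 : quotRank M S = 0 := rank_subsingleton' _ _
  rw [h] at h0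
  exact one_ne_zero h0

lemma inf_spans_bot {X Y : Submodule K V} (hXY : X ⊓ Y = ⊥) {x y : V}
    (hx : x ∈ X) (hy : y ∈ Y) :
    span K ({x} : Set V) ⊓ span K ({y} : Set V) = ⊥ := by
  rw [eq_bot_iff, ← hXY]
  exact inf_le_inf ((span_le).mpr (Set.singleton_subset_iff.mpr hx))
    ((span_le).mpr (Set.singleton_subset_iff.mpr hy))

lemma rank_sup_spans_two {x y : V} (hx0 : x ≠ 0) (hy0 : y ≠ 0)
    (hbot : span K ({x} : Set V) ⊓ span K ({y} : Set V) = ⊥) :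
    Module.rank K (span K ({x} : Set V) ⊔ span K ({y} : Set V) : Submodule K V) = 2 := by
  have h := Submodule.rank_sup_add_rank_inf_eq (span K ({x} : Set V)) (span K ({y} : Set V))
  rw [hbot, rank_bot, add_zero, rank_span_singleton'' hx0, rank_span_singleton'' hy0] at h
  rw [h, one_add_one_eq_two]

lemma mem_grass_of_rank_eq {W E₀ E : Submodule K V} (hG : E₀ ∈ Grass K V)
    (h0E : IsCompl E₀ E) (hWE : IsCompl W E)
    (hrank : Module.rank K W = Module.rank K E₀) : W ∈ Grass K V := by
  obtain ⟨e1⟩ : Nonempty (W ≃ₗ[K] E₀) := nonempty_linearEquiv_of_rank_eq hrank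
  obtain ⟨e2⟩ := hG
  have e3 : (V ⧸ E₀) ≃ₗ[K] E := Submodule.quotientEquivOfIsCompl E₀ E h0E
  have e4 : (V ⧸ W) ≃ₗ[K] E := Submodule.quotientEquivOfIsCompl W E hWE
  exact ⟨e1.trans (e2.trans (e3.trans e4.symm))⟩

/-- If `W` is adjacent to `E₀`, `E₀` and `E₁` are complementary, and `W` is not
distant from `E₁`, then `W` meets `E₁`. -/
lemma inf_ne_bot_of_not_distant {W E₀ E₁ : Submodule K V} (hc : IsCompl E₀ E₁)
    (hadj : Adjacent W E₀) (hnd : ¬ Distant W E₁) : W ⊓ E₁ ≠ ⊥ := by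
  obtain ⟨q1, q2⟩ := hadj
  by_contra hb
  apply hnd
  obtain ⟨w, hwW, hwM⟩ := exists_mem_not_mem_of_quotRank_one q1
  have hwE₀ : w ∉ E₀ := fun h => hwM ⟨hwW, h⟩
  have hmem : w ∈ E₀ ⊔ E₁ := by rw [hc.sup_eq_top]; trivial
  obtain ⟨w₀, hw₀, w₁, hw₁, hwsum⟩ := Submodule.mem_sup.mp hmem
  have hw₀M : w₀ ∉ W ⊓ E₀ := by
    intro hmem0
    have hw1W : w₁ ∈ W ⊓ E₁ := ⟨by
      have : w₁ = w - w₀ := by rw [← hwsum]; abel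
      rw [this]; exact W.sub_mem hwW hmem0.1, hw₁⟩
    rw [hb] at hw1W
    have : w₁ = 0 := by simpa using hw1W
    apply hwE₀; rw [← hwsum, this, add_zero]; exact hw₀
  have hsup : (W ⊓ E₀) ⊔ span K {w₀} = E₀ :=
    sup_span_of_quotRank_eq_one inf_le_right q2 hw₀ hw₀M
  constructor
  · exact disjoint_iff.mpr hb
  · rw [codisjoint_iff, eq_top_iff, ← hc.sup_eq_top]
    apply sup_le _ le_sup_right
    rw [← hsup]
    apply sup_le (le_trans inf_le_left le_sup_left)
    rw [span_le, Set.singleton_subset_iff]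
    have : w₀ = w - w₁ := by rw [← hwsum]; abel
    rw [this]
    exact sub_mem (Submodule.mem_sup_left hwW) (Submodule.mem_sup_right hw₁)

end Helpers


section Mains

open Submodule

variable {K V : Type*} [DivisionRing K] [AddCommGroup V] [Module K V]

lemma boxTwo_of_meets {R : Set (Submodule K V)} (hR : IsDistantClique R)
    (hM : MeetsThreeMeetsAll R) : BoxTwo R := by
  intro E₀ hE₀ E₁ hE₁ E₂ hE₂ h01 h02 h12 W _hWG hadj hnd1 hnd2 E hE hDist
  have D01 : Distant E₀ E₁ := hR.2 hE₀ hE₁ h01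
  have D02 : Distant E₀ E₂ := hR.2 hE₀ hE₂ h02
  have D12 : Distant E₁ E₂ := hR.2 hE₁ hE₂ h12
  have h01b : E₀ ⊓ E₁ = ⊥ := disjoint_iff.mp D01.disjoint
  have h12b : E₁ ⊓ E₂ = ⊥ := disjoint_iff.mp D12.disjoint
  obtain ⟨w₁, hw₁, hw₁0⟩ := (Submodule.ne_bot_iff _).mp (inf_ne_bot_of_not_distant D01 hadj hnd1)
  obtain ⟨w₂, hw₂, hw₂0⟩ := (Submodule.ne_bot_iff _).mp (inf_ne_bot_of_not_distant D02 hadj hnd2)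
  obtain ⟨hw₁W, hw₁E⟩ := Submodule.mem_inf.mp hw₁
  obtain ⟨hw₂W, hw₂E⟩ := Submodule.mem_inf.mp hw₂
  have hw₁E₀ : w₁ ∉ E₀ := by
    intro h
    apply hw₁0
    have : w₁ ∈ E₀ ⊓ E₁ := Submodule.mem_inf.mpr ⟨h, hw₁E⟩
    rwa [h01b, Submodule.mem_bot] at this
  have hw₁M : w₁ ∉ W ⊓ E₀ := fun h => hw₁E₀ (Submodule.mem_inf.mp h).2
  have hsup : (W ⊓ E₀) ⊔ span K {w₁} = W :=
    sup_span_of_quotRank_eq_one inf_le_left hadj.1 hw₁W hw₁M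
  have hw₂W' : w₂ ∈ (W ⊓ E₀) ⊔ span K {w₁} := by rw [hsup]; exact hw₂W
  obtain ⟨m, hm, y, hy, hmsum⟩ := Submodule.mem_sup.mp hw₂W'
  obtain ⟨c, rfl⟩ := Submodule.mem_span_singleton.mp hy
  have hmE₀ : m ∈ E₀ := (Submodule.mem_inf.mp hm).2
  have hm0 : m ≠ 0 := by
    intro h
    rw [h, zero_add] at hmsum
    apply hw₂0
    have : w₂ ∈ E₁ ⊓ E₂ := Submodule.mem_inf.mpr ⟨by rw [← hmsum]; exact E₁.smul_mem _ hw₁E, hw₂E⟩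
    rwa [h12b, Submodule.mem_bot] at this
  set L := span K ({w₁} : Set V) ⊔ span K ({w₂} : Set V) with hLdef
  have hLine : IsLine L := rank_sup_spans_two hw₁0 hw₂0 (inf_spans_bot h12b hw₁E hw₂E)
  have hw₁L : w₁ ∈ L := Submodule.mem_sup_left (Submodule.mem_span_singleton_self _)
  have hw₂L : w₂ ∈ L := Submodule.mem_sup_right (Submodule.mem_span_singleton_self _)
  have hmL : m ∈ L := by
    have : m = w₂ - c • w₁ := by rw [← hmsum]; abel
    rw [this]
    exact L.sub_mem hw₂L (L.smul_mem _ hw₁L)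
  have hm1 : Meets L E₀ := (Submodule.ne_bot_iff _).mpr ⟨m, Submodule.mem_inf.mpr ⟨hmL, hmE₀⟩, hm0⟩
  have hm2 : Meets L E₁ := (Submodule.ne_bot_iff _).mpr ⟨w₁, Submodule.mem_inf.mpr ⟨hw₁L, hw₁E⟩, hw₁0⟩
  have hm3 : Meets L E₂ := (Submodule.ne_bot_iff _).mpr ⟨w₂, Submodule.mem_inf.mpr ⟨hw₂L, hw₂E⟩, hw₂0⟩
  have hMeets : Meets L E := hM L hLine E₀ hE₀ E₁ hE₁ E₂ hE₂ h01 h02 h12 hm1 hm2 hm3 E hE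
  apply hMeets
  rw [eq_bot_iff]
  have hLW : L ≤ W := sup_le ((span_le).mpr (Set.singleton_subset_iff.mpr hw₁W))
    ((span_le).mpr (Set.singleton_subset_iff.mpr hw₂W))
  calc L ⊓ E ≤ W ⊓ E := inf_le_inf_right E hLW
    _ = ⊥ := disjoint_iff.mp hDist.disjoint

lemma meets_of_boxTwo {R : Set (Submodule K V)} (hR : IsDistantClique R)
    (hB : BoxTwo R) : MeetsThreeMeetsAll R := by
  intro L hLine E₀ hE₀ E₁ hE₁ E₂ hE₂ h01 h02 h12 m0 m1 m2 E hE
  by_cases he0 : E = E₀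
  · rwa [he0]
  by_cases he1 : E = E₁
  · rwa [he1]
  by_cases he2 : E = E₂
  · rwa [he2]
  by_contra hLE'
  have hLE : L ⊓ E = ⊥ := not_not.mp hLE'
  have D01 : Distant E₀ E₁ := hR.2 hE₀ hE₁ h01
  have D02 : Distant E₀ E₂ := hR.2 hE₀ hE₂ h02
  have D12 : Distant E₁ E₂ := hR.2 hE₁ hE₂ h12
  have D0E : Distant E₀ E := hR.2 hE₀ hE (fun h => he0 h.symm)
  have h01b : E₀ ⊓ E₁ = ⊥ := disjoint_iff.mp D01.disjoint
  have h02b : E₀ ⊓ E₂ = ⊥ := disjoint_iff.mp D02.disjoint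
  have h12b : E₁ ⊓ E₂ = ⊥ := disjoint_iff.mp D12.disjoint
  have h0Eb : E₀ ⊓ E = ⊥ := disjoint_iff.mp D0E.disjoint
  obtain ⟨v₀, hv₀, hv₀0⟩ := (Submodule.ne_bot_iff _).mp m0
  obtain ⟨u₁, hu₁, hu₁0⟩ := (Submodule.ne_bot_iff _).mp m1
  obtain ⟨u₂, hu₂, hu₂0⟩ := (Submodule.ne_bot_iff _).mp m2
  obtain ⟨hv₀L, hv₀E₀⟩ := Submodule.mem_inf.mp hv₀
  obtain ⟨hu₁L, hu₁E₁⟩ := Submodule.mem_inf.mp hu₁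
  obtain ⟨hu₂L, hu₂E₂⟩ := Submodule.mem_inf.mp hu₂
  -- `span v₀ ⊔ span u₁ = L`
  set S := span K ({v₀} : Set V) ⊔ span K ({u₁} : Set V) with hSdef
  have hSL : S ≤ L := sup_le ((span_le).mpr (Set.singleton_subset_iff.mpr hv₀L))
    ((span_le).mpr (Set.singleton_subset_iff.mpr hu₁L))
  have hrkS : Module.rank K S = 2 := rank_sup_spans_two hv₀0 hu₁0 (inf_spans_bot h01b hv₀E₀ hu₁E₁)
  have hfdL : FiniteDimensional K L := Module.finite_of_rank_eq_nat (n := 2) (by exact_mod_cast hLine)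
  have hfrL : Module.finrank K L = 2 := Module.finrank_eq_of_rank_eq (by exact_mod_cast hLine)
  have hfrS : Module.finrank K S = 2 := Module.finrank_eq_of_rank_eq (by exact_mod_cast hrkS)
  have hu₂S : u₂ ∈ S := by
    have htop : S.comap L.subtype = ⊤ := by
      apply Submodule.eq_top_of_finrank_eq
      rw [hfrL, (Submodule.comapSubtypeEquivOfLe hSL).finrank_eq, hfrS]
    have : (⟨u₂, hu₂L⟩ : L) ∈ S.comap L.subtype := by rw [htop]; trivial
    simpa using Submodule.mem_comap.mp this
  obtain ⟨y, hy, y', hy', hsumS⟩ := Submodule.mem_sup.mp hu₂S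
  obtain ⟨α, rfl⟩ := Submodule.mem_span_singleton.mp hy
  obtain ⟨β, rfl⟩ := Submodule.mem_span_singleton.mp hy'
  have hα : α ≠ 0 := by
    rintro rfl
    rw [zero_smul, zero_add] at hsumS
    apply hu₂0
    have : u₂ ∈ E₁ ⊓ E₂ := Submodule.mem_inf.mpr ⟨by rw [← hsumS]; exact E₁.smul_mem _ hu₁E₁, hu₂E₂⟩
    rwa [h12b, Submodule.mem_bot] at this
  have hβ : β ≠ 0 := by
    rintro rfl
    rw [zero_smul, add_zero] at hsumS
    apply hu₂0
    have : u₂ ∈ E₀ ⊓ E₂ := Submodule.mem_inf.mpr ⟨by rw [← hsumS]; exact E₀.smul_mem _ hv₀E₀, hu₂E₂⟩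
    rwa [h02b, Submodule.mem_bot] at this
  set z := α⁻¹ • u₂ with hzdef
  set t := (α⁻¹ * β) • u₁ with htdef
  have hz : z = v₀ + t := by
    rw [hzdef, ← hsumS, smul_add, smul_smul, smul_smul, inv_mul_cancel₀ hα, one_smul]
  have hzL : z ∈ L := L.smul_mem _ hu₂L
  have hzE₂ : z ∈ E₂ := E₂.smul_mem _ hu₂E₂
  have hz0 : z ≠ 0 := smul_ne_zero (inv_ne_zero hα) hu₂0
  have htE₁ : t ∈ E₁ := E₁.smul_mem _ hu₁E₁
  have ht0 : t ≠ 0 := smul_ne_zero (mul_ne_zero (inv_ne_zero hα) hβ) hu₁0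
  -- decompose z along E₀ ⊕ E
  have hztop : z ∈ E₀ ⊔ E := by rw [D0E.sup_eq_top]; trivial
  obtain ⟨a, haE₀, b, hbE, hab⟩ := Submodule.mem_sup.mp hztop
  set p := span K ({v₀} : Set V) with hpdef
  set q := span K ({a} : Set V) with hqdef
  have haP : a ∉ p := by
    intro hmem
    obtain ⟨μ, hμ⟩ := Submodule.mem_span_singleton.mp hmem
    have hbL : b ∈ L := by
      have : b = z - a := by rw [← hab]; abel
      rw [this, ← hμ]
      exact L.sub_mem hzL (L.smul_mem _ hv₀L)
    have hb0 : b = 0 := by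
      have : b ∈ L ⊓ E := Submodule.mem_inf.mpr ⟨hbL, hbE⟩
      rwa [hLE, Submodule.mem_bot] at this
    apply ht0
    have hzeq : z = μ • v₀ := by rw [← hab, hb0, add_zero, ← hμ]
    have htE₀ : t ∈ E₀ := by
      have ht : t = μ • v₀ - v₀ := by rw [← hzeq, hz]; abel
      rw [ht]
      exact E₀.sub_mem (E₀.smul_mem _ hv₀E₀) hv₀E₀
    have : t ∈ E₀ ⊓ E₁ := Submodule.mem_inf.mpr ⟨htE₀, htE₁⟩
    rwa [h01b, Submodule.mem_bot] at this
  have ha0 : a ≠ 0 := fun h => haP (h ▸ p.zero_mem)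
  have hpE₀ : p ≤ E₀ := (span_le).mpr (Set.singleton_subset_iff.mpr hv₀E₀)
  have hqE₀ : q ≤ E₀ := (span_le).mpr (Set.singleton_subset_iff.mpr haE₀)
  -- complement of `p ⊔ q` inside `E₀`
  obtain ⟨C, hC⟩ := Submodule.exists_isCompl ((p ⊔ q).comap E₀.subtype)
  set C₀ := C.map E₀.subtype with hC₀def
  have hC₀E₀ : C₀ ≤ E₀ := Submodule.map_subtype_le _ _
  have hmapT : Submodule.map E₀.subtype ((p ⊔ q).comap E₀.subtype) = p ⊔ q := by
    rw [Submodule.map_comap_subtype]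
    exact inf_eq_right.mpr (sup_le hpE₀ hqE₀)
  have hsupC : C₀ ⊔ (p ⊔ q) = E₀ := by
    have h7 : (p ⊔ q).comap E₀.subtype ⊔ C = ⊤ := codisjoint_iff.mp hC.codisjoint
    rw [hC₀def, ← hmapT, ← Submodule.map_sup, sup_comm C ((p ⊔ q).comap E₀.subtype), h7,
      Submodule.map_subtype_top]
  have hinfC : C₀ ⊓ (p ⊔ q) = ⊥ := by
    have h7 : (p ⊔ q).comap E₀.subtype ⊓ C = ⊥ := disjoint_iff.mp hC.disjoint
    rw [hC₀def, ← hmapT, ← Submodule.map_inf E₀.subtype (Submodule.injective_subtype E₀),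
      inf_comm C ((p ⊔ q).comap E₀.subtype), h7, Submodule.map_bot]
  set M := p ⊔ C₀ with hMdef
  have hME₀ : M ≤ E₀ := sup_le hpE₀ hC₀E₀
  have hv₀M : v₀ ∈ M := Submodule.mem_sup_left (Submodule.mem_span_singleton_self v₀)
  have haM : a ∉ M := by
    intro hmem
    obtain ⟨y1, hy1, cc, hcc, hsum2⟩ := Submodule.mem_sup.mp hmem
    have hccmem : cc ∈ C₀ ⊓ (p ⊔ q) := by
      refine Submodule.mem_inf.mpr ⟨hcc, ?_⟩
      have : cc = a - y1 := by rw [← hsum2]; abel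
      rw [this]
      exact Submodule.sub_mem _ (Submodule.mem_sup_right (Submodule.mem_span_singleton_self a))
        (Submodule.mem_sup_left hy1)
    rw [hinfC, Submodule.mem_bot] at hccmem
    apply haP
    rw [hccmem, add_zero] at hsum2
    rw [← hsum2]
    exact hy1
  have hMsupa : M ⊔ q = E₀ := by
    rw [hMdef, sup_right_comm, sup_comm (p ⊔ q) C₀, hsupC]
  -- the subspace W
  have hzE₀ : z ∉ E₀ := by
    intro h
    apply ht0
    have htE₀ : t ∈ E₀ := by
      have ht : t = z - v₀ := by rw [hz]; abel
      rw [ht]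
      exact E₀.sub_mem h hv₀E₀
    have : t ∈ E₀ ⊓ E₁ := Submodule.mem_inf.mpr ⟨htE₀, htE₁⟩
    rwa [h01b, Submodule.mem_bot] at this
  have hzM : z ∉ M := fun h => hzE₀ (hME₀ h)
  set W := M ⊔ span K ({z} : Set V) with hWdef
  have hzW : z ∈ W := Submodule.mem_sup_right (Submodule.mem_span_singleton_self z)
  have hMW : M ≤ W := le_sup_left
  have hWE₀ : W ⊓ E₀ = M := by
    apply le_antisymm
    · rintro x hx
      obtain ⟨hxW, hxE₀⟩ := Submodule.mem_inf.mp hx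
      rw [hWdef] at hxW
      obtain ⟨m', hm', y1, hy1, hsum3⟩ := Submodule.mem_sup.mp hxW
      obtain ⟨c, rfl⟩ := Submodule.mem_span_singleton.mp hy1
      rcases eq_or_ne c 0 with rfl | hc
      · rw [zero_smul, add_zero] at hsum3
        rwa [← hsum3]
      · exfalso
        apply hzE₀
        have : z = c⁻¹ • (x - m') := by
          rw [← hsum3, add_sub_cancel_left, smul_smul, inv_mul_cancel₀ hc, one_smul]
        rw [this]
        exact E₀.smul_mem _ (E₀.sub_mem hxE₀ (hME₀ hm'))
    · exact le_inf hMW hME₀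
  have hAdj : Adjacent W E₀ := by
    constructor
    · rw [hWE₀]
      exact quotRank_eq_one' hMW hzW hzM hWdef.symm
    · rw [hWE₀]
      exact quotRank_eq_one' hME₀ haE₀ haM hMsupa
  have hnd1 : ¬ Distant W E₁ := by
    intro hD
    apply ht0
    have htW : t ∈ W := by
      have ht : t = z - v₀ := by rw [hz]; abel
      rw [ht]
      exact W.sub_mem hzW (hMW hv₀M)
    have : t ∈ W ⊓ E₁ := Submodule.mem_inf.mpr ⟨htW, htE₁⟩
    rwa [disjoint_iff.mp hD.disjoint, Submodule.mem_bot] at this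
  have hnd2 : ¬ Distant W E₂ := by
    intro hD
    apply hz0
    have : z ∈ W ⊓ E₂ := Submodule.mem_inf.mpr ⟨hzW, hzE₂⟩
    rwa [disjoint_iff.mp hD.disjoint, Submodule.mem_bot] at this
  have hMq : M ⊓ q = ⊥ := by
    rw [eq_bot_iff]
    rintro x hx
    obtain ⟨hxM, hxq⟩ := Submodule.mem_inf.mp hx
    obtain ⟨c, hc⟩ := Submodule.mem_span_singleton.mp hxq
    rcases eq_or_ne c 0 with rfl | hc0
    · rw [Submodule.mem_bot, ← hc, zero_smul]
    · exfalso
      apply haM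
      have : a = c⁻¹ • x := by rw [← hc, smul_smul, inv_mul_cancel₀ hc0, one_smul]
      rw [this]
      exact M.smul_mem _ hxM
  have hMz : M ⊓ span K ({z} : Set V) = ⊥ := by
    rw [eq_bot_iff]
    rintro x hx
    obtain ⟨hxM, hxq⟩ := Submodule.mem_inf.mp hx
    obtain ⟨c, hc⟩ := Submodule.mem_span_singleton.mp hxq
    rcases eq_or_ne c 0 with rfl | hc0
    · rw [Submodule.mem_bot, ← hc, zero_smul]
    · exfalso
      apply hzE₀
      have : z = c⁻¹ • x := by rw [← hc, smul_smul, inv_mul_cancel₀ hc0, one_smul]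
      rw [this]
      exact E₀.smul_mem _ (hME₀ hxM)
  have hrW := Submodule.rank_sup_add_rank_inf_eq M (span K ({z} : Set V))
  rw [hMz, rank_bot, add_zero, rank_span_singleton'' hz0] at hrW
  have hrE := Submodule.rank_sup_add_rank_inf_eq M q
  rw [hMq, rank_bot, add_zero, rank_span_singleton'' ha0, hMsupa] at hrE
  have hrank : Module.rank K W = Module.rank K E₀ := by rw [hWdef, hrW, ← hrE]
  have hDWE : Distant W E := by
    constructor
    · rw [disjoint_iff, eq_bot_iff]
      rintro x hx
      obtain ⟨hxW, hxE⟩ := Submodule.mem_inf.mp hx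
      rw [hWdef] at hxW
      obtain ⟨m', hm', y1, hy1, hsum4⟩ := Submodule.mem_sup.mp hxW
      obtain ⟨c, rfl⟩ := Submodule.mem_span_singleton.mp hy1
      have hxE₀E : m' + c • a ∈ E₀ ⊓ E := by
        refine Submodule.mem_inf.mpr ⟨E₀.add_mem (hME₀ hm') (E₀.smul_mem _ haE₀), ?_⟩
        have : m' + c • a = x - c • b := by rw [← hsum4, ← hab, smul_add]; abel
        rw [this]
        exact E.sub_mem hxE (E.smul_mem _ hbE)
      rw [h0Eb, Submodule.mem_bot] at hxE₀E
      have hc0 : c = 0 := by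
        by_contra hc
        apply haM
        have h5 : c • a = -m' := by
          have := hxE₀E
          rw [add_comm] at this
          exact add_eq_zero_iff_eq_neg.mp this
        have : a = c⁻¹ • -m' := by rw [← h5, smul_smul, inv_mul_cancel₀ hc, one_smul]
        rw [this]
        exact M.smul_mem _ (M.neg_mem hm')
      rw [hc0, zero_smul, add_zero] at hsum4
      rw [hc0, zero_smul, add_zero] at hxE₀E
      rw [Submodule.mem_bot, ← hsum4, hxE₀E]
    · rw [codisjoint_iff, eq_top_iff, ← D0E.sup_eq_top]
      apply sup_le _ le_sup_right
      rw [← hMsupa]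
      apply sup_le (le_trans hMW le_sup_left)
      rw [hqdef, span_le, Set.singleton_subset_iff]
      have : a = z - b := by rw [← hab]; abel
      rw [this]
      exact Submodule.sub_mem _ (Submodule.mem_sup_left hzW) (Submodule.mem_sup_right hbE)
  have hWG : W ∈ Grass K V := mem_grass_of_rank_eq (hR.1 hE₀) D0E hDWE hrank
  exact hB E₀ hE₀ E₁ hE₁ E₂ hE₂ h01 h02 h12 W hWG hAdj hnd1 hnd2 E hE hDWE

lemma partialZRegulus_iff_box (R : Set (Submodule K V)) :
    IsPartialZRegulus R ↔ ((IsDistantClique R ∧ HasThree R) ∧ BoxTwo R) := by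
  constructor
  · rintro ⟨⟨hc, h3⟩, hm⟩
    exact ⟨⟨hc, h3⟩, boxTwo_of_meets hc hm⟩
  · rintro ⟨⟨hc, h3⟩, hb⟩
    exact ⟨⟨hc, h3⟩, meets_of_boxTwo hc hb⟩

end Mains


/-- Theorem 4.11. `R ⊆ 𝒢` is a `Z`-regulus iff it satisfies the
conditions (⊠1), (⊠2), (⊠3) formulated in terms of the distant relation. -/
theorem zRegulus_iff_box (hV : 2 < Module.rank K V)
    (R : Set (Submodule K V)) :
    IsZRegulus R ↔
      ((IsDistantClique R ∧ HasThree R) ∧ BoxTwo R ∧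
        ∀ S : Set (Submodule K V),
          (IsDistantClique S ∧ HasThree S) ∧ BoxTwo S → R ⊆ S → R = S) := by
  constructor
  · rintro ⟨hp, hmax⟩
    obtain ⟨⟨hc, h3⟩, hb⟩ := (partialZRegulus_iff_box R).mp hp
    exact ⟨⟨hc, h3⟩, hb, fun S hS hRS => hmax S ((partialZRegulus_iff_box S).mpr hS) hRS⟩
  · rintro ⟨⟨hc, h3⟩, hb, hmax⟩
    exact ⟨(partialZRegulus_iff_box R).mpr ⟨⟨hc, h3⟩, hb⟩,
      fun S hS hRS => hmax S ((partialZRegulus_iff_box S).mp hS) hRS⟩
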